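/- arXiv:1407.4963 — 6 statements merged into one kernel-verified Lean document; each statement's English description precedes it below -/
import Mathlib

section
/- If (L, [-,-], d) is a differential Lie algebra (d a derivation of the Lie bracket squaring to zero), then the derived bracket [x,y]_d := [dx, y] makes L into a left Leibniz algebra, i.e. [x,[y,z]_d]_d = [[x,y]_d,z]_d + [y,[x,z]_d]_d. -/
/-- The derived bracket `[x,y]_d := [dx, y]` of a differential Lie algebra
satisfies the left Leibniz identity. -/
theorem derived_bracket_leibniz {K L : Type*} [Field K] [LieRing L] [LieAlgebra K L]
    (d : L →ₗ[K] L) (hd2 : ∀ x, d (d x) = 0)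
    (hder : ∀ x y : L, d ⁅x, y⁆ = ⁅d x, y⁆ + ⁅x, d y⁆) :
    ∀ x y z : L, ⁅d x, ⁅d y, z⁆⁆ = ⁅d ⁅d x, y⁆, z⁆ + ⁅d y, ⁅d x, z⁆⁆ := by
  intro x y z
  have h : d ⁅d x, y⁆ = ⁅d x, d y⁆ := by rw [hder, hd2, zero_lie, zero_add]
  rw [h, lie_lie, leibniz_lie]
  abel
end

section
/- If 𝔥 is a Leibniz representation of the Lie algebra 𝔤 (with left and right actions), then 𝔞 = 𝔤 ⊕ 𝔥 with bracket [(g₁,h₁),(g₂,h₂)] := ([g₁,g₂], [g₁,h₂] + [h₁,g₂]) is a Leibniz algebra, and the projection to 𝔤 makes it an exact Courant algebra over 𝔤. -/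
/-- If `𝔥` is a Leibniz representation of the Lie algebra `𝔤` (with left action `l`
and right action `r`), then `𝔞 = 𝔤 ⊕ 𝔥` with bracket
`[(g₁,h₁),(g₂,h₂)] = ([g₁,g₂], [g₁,h₂] + [h₁,g₂])` is a Leibniz algebra, and the
projection to `𝔤` makes it an exact Courant algebra over `𝔤`. -/
theorem leibniz_hemisemidirect_exact_courant {K 𝔤 𝔥 : Type*} [Field K]
    [LieRing 𝔤] [LieAlgebra K 𝔤] [AddCommGroup 𝔥] [Module K 𝔥]
    (l : 𝔤 →ₗ[K] 𝔥 →ₗ[K] 𝔥) (r : 𝔥 →ₗ[K] 𝔤 →ₗ[K] 𝔥)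
    (hl : ∀ (x y : 𝔤) (m : 𝔥), l x (l y m) = l ⁅x, y⁆ m + l y (l x m))
    (hm : ∀ (x y : 𝔤) (m : 𝔥), l x (r m y) = r (l x m) y + r m ⁅x, y⁆)
    (hr : ∀ (x y : 𝔤) (m : 𝔥), r m ⁅x, y⁆ = r (r m x) y + l x (r m y))
    (br : (𝔤 × 𝔥) → (𝔤 × 𝔥) → (𝔤 × 𝔥))
    (hbr : ∀ a b : 𝔤 × 𝔥, br a b = (⁅a.1, b.1⁆, l a.1 b.2 + r a.2 b.1))
    (π : (𝔤 × 𝔥) → 𝔤) (hπ : ∀ a : 𝔤 × 𝔥, π a = a.1) :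
    (∀ a b c : 𝔤 × 𝔥, br a (br b c) = br (br a b) c + br b (br a c)) ∧
    (∀ a b : 𝔤 × 𝔥, π (br a b) = ⁅π a, π b⁆) ∧
    Function.Surjective π ∧
    (∀ a b : 𝔤 × 𝔥, π a = 0 → π b = 0 → br a b = 0) := by
  refine ⟨?_, ?_, ?_, ?_⟩
  · intro a b c
    rw [hbr, hbr, hbr, hbr, hbr, hbr, Prod.mk_add_mk, Prod.mk.injEq]
    refine ⟨leibniz_lie a.1 b.1 c.1, ?_⟩
    simp only [map_add, LinearMap.add_apply]
    rw [hl a.1 b.1 c.2, hm a.1 c.1 b.2, hr b.1 c.1 a.2]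
    abel
  · intro a b; simp [hbr, hπ]
  · intro x; exact ⟨(x, 0), hπ _⟩
  · intro a b ha hb
    rw [hπ] at ha hb
    simp [hbr, ha, hb, Prod.ext_iff]
end

section
/- For an exact Courant algebra π: 𝔞 → 𝔤 with 𝔥 = ker π, the brackets [g,h] := [a,h] and [h,g] := [h,a] for any a with π(a) = g are well-defined (independent of the choice of a) and endow 𝔥 with the structure of a Leibniz representation of 𝔤. -/
/-- For an exact Courant algebra `π : 𝔞 → 𝔤` with abelian kernel `𝔥 = ker π`, the
brackets `[g,h] := [a,h]` and `[h,g] := [h,a]` (for any `a` with `π a = g`) are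
well defined and endow `𝔥` with the structure of a Leibniz representation of `𝔤`. -/
theorem exact_courant_kernel_representation {K 𝔤 𝔞 : Type*} [Field K]
    [LieRing 𝔤] [LieAlgebra K 𝔤] [AddCommGroup 𝔞] [Module K 𝔞]
    (br : 𝔞 →ₗ[K] 𝔞 →ₗ[K] 𝔞)
    (hleib : ∀ x y z : 𝔞, br x (br y z) = br (br x y) z + br y (br x z))
    (π : 𝔞 →ₗ[K] 𝔤) (hsurj : Function.Surjective π)
    (hhom : ∀ x y : 𝔞, π (br x y) = ⁅π x, π y⁆)
    (habel : ∀ h₁ h₂ : 𝔞, π h₁ = 0 → π h₂ = 0 → br h₁ h₂ = 0) :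
    -- the actions are well defined (independent of the choice of lift)
    (∀ a a' h : 𝔞, π a = π a' → π h = 0 → br a h = br a' h ∧ br h a = br h a') ∧
    -- the actions take values in the kernel 𝔥
    (∀ a h : 𝔞, π h = 0 → π (br a h) = 0 ∧ π (br h a) = 0) ∧
    -- the Leibniz representation identities, with one variable in 𝔥
    (∀ a b h : 𝔞, π h = 0 →
      br a (br b h) = br (br a b) h + br b (br a h) ∧
      br a (br h b) = br (br a h) b + br h (br a b) ∧
      br h (br a b) = br (br h a) b + br a (br h b)) := by
  refine ⟨?_, ?_, ?_⟩
  · intro a a' h haa hh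
    have hd : π (a - a') = 0 := by simp [haa]
    constructor
    · have := habel (a - a') h hd hh
      have h2 : br a h - br a' h = 0 := by
        simpa [map_sub, LinearMap.sub_apply] using this
      exact sub_eq_zero.mp h2
    · have := habel h (a - a') hh hd
      have h2 : br h a - br h a' = 0 := by simpa [map_sub] using this
      exact sub_eq_zero.mp h2
  · intro a h hh
    constructor <;> simp [hhom, hh]
  · intro a b h hh
    exact ⟨hleib a b h, hleib a h b, hleib h a b⟩
end

section
/- Let F be an automorphism of the exact Courant algebra π: 𝔞 → 𝔤 with kernel 𝔥 (π∘F = π and F restricts to the identity on 𝔥), and let q be a section of π. Then the map ψ: 𝔤 → 𝔥 defined by ψ(g) = F(q(g)) − q(g) is a Leibniz 1-cocycle: ψ([g₁,g₂]) = [g₁,ψ(g₂)] + [ψ(g₁),g₂] for all g₁,g₂ ∈ 𝔤. -/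
/-- An automorphism `F` of an exact Courant algebra `π : 𝔞 → 𝔤` (with `π ∘ F = π`
and `F` the identity on the kernel `𝔥`) determines, via a section `q`, a Leibniz
1-cocycle `ψ(g) = F(q g) - q g`: it satisfies
`ψ(⁅g₁,g₂⁆) = [g₁, ψ g₂] + [ψ g₁, g₂]`. -/
theorem automorphism_gives_one_cocycle {K 𝔤 𝔞 : Type*} [Field K]
    [LieRing 𝔤] [LieAlgebra K 𝔤] [AddCommGroup 𝔞] [Module K 𝔞]
    (br : 𝔞 →ₗ[K] 𝔞 →ₗ[K] 𝔞)
    (hleib : ∀ x y z : 𝔞, br x (br y z) = br (br x y) z + br y (br x z))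
    (π : 𝔞 →ₗ[K] 𝔤) (hsurj : Function.Surjective π)
    (hhom : ∀ x y : 𝔞, π (br x y) = ⁅π x, π y⁆)
    (habel : ∀ h₁ h₂ : 𝔞, π h₁ = 0 → π h₂ = 0 → br h₁ h₂ = 0)
    (q : 𝔤 →ₗ[K] 𝔞) (hq : ∀ g : 𝔤, π (q g) = g)
    (F : 𝔞 →ₗ[K] 𝔞)
    (hFbr : ∀ x y : 𝔞, F (br x y) = br (F x) (F y))
    (hFπ : ∀ x : 𝔞, π (F x) = π x)
    (hFker : ∀ x : 𝔞, π x = 0 → F x = x)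
    (ψ : 𝔤 → 𝔞) (hψ : ∀ g : 𝔤, ψ g = F (q g) - q g) :
    (∀ g : 𝔤, π (ψ g) = 0) ∧
    (∀ g₁ g₂ : 𝔤, ψ ⁅g₁, g₂⁆ = br (q g₁) (ψ g₂) + br (ψ g₁) (q g₂)) := by
  have hπψ : ∀ g : 𝔤, π (ψ g) = 0 := by
    intro g
    rw [hψ, map_sub, hFπ, sub_self]
  refine ⟨hπψ, fun g₁ g₂ => ?_⟩
  set h : 𝔞 := q ⁅g₁, g₂⁆ - br (q g₁) (q g₂) with hh
  have hπh : π h = 0 := by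
    simp [hh, hhom, hq]
  have hFh : F h = h := hFker h hπh
  have hqbr : q ⁅g₁, g₂⁆ = br (q g₁) (q g₂) + h := by
    simp [hh]
  have hFq : ∀ g : 𝔤, F (q g) = q g + ψ g := by
    intro g; rw [hψ]; abel
  have hψψ : br (ψ g₁) (ψ g₂) = 0 := habel _ _ (hπψ g₁) (hπψ g₂)
  rw [hψ, hqbr, map_add, hFbr, hFh, hFq, hFq]
  simp only [map_add, LinearMap.add_apply]
  rw [hψψ]
  abel
end

section
/- The group of automorphisms of a given exact Courant algebra π: 𝔞 → 𝔤 with kernel 𝔥 is in one-to-one correspondence with the space of Leibniz 1-cocycles HL¹(𝔤;𝔥) = {ψ: 𝔤 → 𝔥 linear | ψ([x,y]) = [x,ψ(y)] + [ψ(x),y]}. -/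
/-- The group of automorphisms of an exact Courant algebra `π : 𝔞 → 𝔤` with kernel
`𝔥` is in one-to-one correspondence with the space `HL¹(𝔤;𝔥)` of Leibniz
1-cocycles, via `F ↦ (g ↦ F(q g) - q g)` for a fixed section `q`. -/
theorem automorphisms_equiv_one_cocycles {K 𝔤 𝔞 : Type*} [Field K]
    [LieRing 𝔤] [LieAlgebra K 𝔤] [AddCommGroup 𝔞] [Module K 𝔞]
    (br : 𝔞 →ₗ[K] 𝔞 →ₗ[K] 𝔞)
    (hleib : ∀ x y z : 𝔞, br x (br y z) = br (br x y) z + br y (br x z))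
    (π : 𝔞 →ₗ[K] 𝔤) (hsurj : Function.Surjective π)
    (hhom : ∀ x y : 𝔞, π (br x y) = ⁅π x, π y⁆)
    (habel : ∀ h₁ h₂ : 𝔞, π h₁ = 0 → π h₂ = 0 → br h₁ h₂ = 0)
    (q : 𝔤 →ₗ[K] 𝔞) (hq : ∀ g : 𝔤, π (q g) = g) :
    ∃ e : { F : 𝔞 ≃ₗ[K] 𝔞 //
              (∀ x y : 𝔞, F (br x y) = br (F x) (F y)) ∧
              (∀ x : 𝔞, π (F x) = π x) ∧
              (∀ x : 𝔞, π x = 0 → F x = x) } ≃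
          { ψ : 𝔤 →ₗ[K] 𝔞 //
              (∀ g : 𝔤, π (ψ g) = 0) ∧
              (∀ g₁ g₂ : 𝔤, ψ ⁅g₁, g₂⁆ = br (q g₁) (ψ g₂) + br (ψ g₁) (q g₂)) },
      ∀ F g, (e F).1 g = F.1 (q g) - q g := by
  classical
  have hker : ∀ x : 𝔞, π (x - q (π x)) = 0 := fun x => by simp [hq]
  -- forward map
  have fwd : ∀ F : { F : 𝔞 ≃ₗ[K] 𝔞 //
              (∀ x y : 𝔞, F (br x y) = br (F x) (F y)) ∧
              (∀ x : 𝔞, π (F x) = π x) ∧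
              (∀ x : 𝔞, π x = 0 → F x = x) },
      (∀ g : 𝔤, π (((F.1 : 𝔞 →ₗ[K] 𝔞) ∘ₗ q - q) g) = 0) ∧
      (∀ g₁ g₂ : 𝔤, ((F.1 : 𝔞 →ₗ[K] 𝔞) ∘ₗ q - q) ⁅g₁, g₂⁆ =
        br (q g₁) (((F.1 : 𝔞 →ₗ[K] 𝔞) ∘ₗ q - q) g₂) +
        br (((F.1 : 𝔞 →ₗ[K] 𝔞) ∘ₗ q - q) g₁) (q g₂)) := by
    rintro ⟨F, hbr, hπ, hfix⟩
    have hψ0 : ∀ g : 𝔤, π (F (q g) - q g) = 0 := fun g => by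
      simp [hπ, hq]
    constructor
    · intro g; simpa using hψ0 g
    · intro g₁ g₂
      have h1 : F (q ⁅g₁, g₂⁆ - br (q g₁) (q g₂)) = q ⁅g₁, g₂⁆ - br (q g₁) (q g₂) := by
        apply hfix
        simp [hhom, hq]
      have h2 : F (q ⁅g₁, g₂⁆) = q ⁅g₁, g₂⁆ - br (q g₁) (q g₂) + br (F (q g₁)) (F (q g₂)) := by
        have h3 := map_sub F (q ⁅g₁, g₂⁆) (br (q g₁) (q g₂))
        rw [h1, hbr] at h3
        exact sub_eq_iff_eq_add.mp h3.symm
      have hz : br (F (q g₁) - q g₁) (F (q g₂) - q g₂) = 0 :=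
        habel _ _ (hψ0 g₁) (hψ0 g₂)
      simp only [LinearMap.sub_apply, LinearMap.coe_comp, Function.comp_apply,
        LinearEquiv.coe_coe]
      rw [h2]
      have e1 : br (F (q g₁)) (F (q g₂)) =
          br (q g₁) (F (q g₂) - q g₂) + br (F (q g₁) - q g₁) (q g₂)
            + br (q g₁) (q g₂) + br (F (q g₁) - q g₁) (F (q g₂) - q g₂) := by
        simp only [map_sub, LinearMap.sub_apply]
        abel
      rw [e1, hz]
      abel
  -- backward map
  have bwdinv : ∀ ψ : { ψ : 𝔤 →ₗ[K] 𝔞 //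
              (∀ g : 𝔤, π (ψ g) = 0) ∧
              (∀ g₁ g₂ : 𝔤, ψ ⁅g₁, g₂⁆ = br (q g₁) (ψ g₂) + br (ψ g₁) (q g₂)) },
      ((LinearMap.id + ψ.1 ∘ₗ π) ∘ₗ (LinearMap.id - ψ.1 ∘ₗ π) = LinearMap.id) ∧
      ((LinearMap.id - ψ.1 ∘ₗ π) ∘ₗ (LinearMap.id + ψ.1 ∘ₗ π) = LinearMap.id) := by
    rintro ⟨ψ, h0, hc⟩
    constructor <;>
      · apply LinearMap.ext; intro x
        simp [map_sub, map_add, h0]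
  refine ⟨{
    toFun := fun F => ⟨(F.1 : 𝔞 →ₗ[K] 𝔞) ∘ₗ q - q, fwd F⟩
    invFun := fun ψ => ⟨LinearEquiv.ofLinear (LinearMap.id + ψ.1 ∘ₗ π)
        (LinearMap.id - ψ.1 ∘ₗ π) (bwdinv ψ).1 (bwdinv ψ).2, ?_, ?_, ?_⟩
    left_inv := ?_
    right_inv := ?_ }, ?_⟩
  · -- bracket
    intro x y
    obtain ⟨ψ, h0, hc⟩ := ψ
    simp only [LinearEquiv.ofLinear_apply, LinearMap.add_apply, LinearMap.id_apply,
      LinearMap.coe_comp, Function.comp_apply]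
    have hkψ : ∀ g, π (ψ g) = 0 := h0
    have e1 : br x (ψ (π y)) = br (q (π x)) (ψ (π y)) := by
      have h : br x (ψ (π y)) - br (q (π x)) (ψ (π y)) = 0 := by
        have h2 := congrArg (fun f => f (ψ (π y))) (br.map_sub x (q (π x)))
        simp only [LinearMap.sub_apply] at h2
        rw [← h2]
        exact habel _ _ (hker x) (hkψ _)
      exact sub_eq_zero.mp h
    have e2 : br (ψ (π x)) y = br (ψ (π x)) (q (π y)) := by
      have h : br (ψ (π x)) y - br (ψ (π x)) (q (π y)) = 0 := by
        rw [← (br (ψ (π x))).map_sub]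
        exact habel _ _ (hkψ _) (hker y)
      exact sub_eq_zero.mp h
    have hz : br (ψ (π x)) (ψ (π y)) = 0 := habel _ _ (hkψ _) (hkψ _)
    have expand : br (x + ψ (π x)) (y + ψ (π y)) =
        br x y + br x (ψ (π y)) + br (ψ (π x)) y + br (ψ (π x)) (ψ (π y)) := by
      simp only [map_add, LinearMap.add_apply]; abel
    rw [expand, hz, e1, e2, hhom, hc]
    abel
  · -- π ∘ F = π
    intro x
    obtain ⟨ψ, h0, hc⟩ := ψ
    simp [h0]
  · -- fixes kernel
    intro x hx
    obtain ⟨ψ, h0, hc⟩ := ψ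
    simp [hx]
  · -- left inverse
    rintro ⟨F, hbr, hπ, hfix⟩
    apply Subtype.ext
    apply LinearEquiv.toLinearMap_injective
    apply LinearMap.ext
    intro x
    have h1 : F (x - q (π x)) = x - q (π x) := hfix _ (hker x)
    simp only [LinearEquiv.coe_coe, LinearEquiv.ofLinear_apply, LinearMap.add_apply,
      LinearMap.id_apply, LinearMap.coe_comp, Function.comp_apply, LinearMap.sub_apply]
    have h3 : F x = x - q (π x) + F (q (π x)) := by
      conv_lhs => rw [show x = (x - q (π x)) + q (π x) by abel]
      rw [map_add, h1]
    rw [h3]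
    abel
  · -- right inverse
    rintro ⟨ψ, h0, hc⟩
    apply Subtype.ext
    apply LinearMap.ext
    intro g
    simp [hq]
  · intro F g
    simp
end

section
/- The composition of two automorphisms F, F′ of an exact Courant algebra corresponds to the sum of the associated 1-cocycles: if ψ_F(g) = F(q(g)) − q(g), then ψ_{F∘F′} = ψ_F + ψ_{F′}; hence the automorphism group of an exact Courant algebra is abelian and isomorphic as a group to the additive group of Leibniz 1-cocycles. -/
/-- Composition of automorphisms of an exact Courant algebra corresponds to the sum
of the associated 1-cocycles: `ψ_{F∘F'} = ψ_F + ψ_{F'}`, where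
`ψ_F(g) = F(q g) - q g`; in particular automorphisms commute, so the automorphism
group is abelian (and, by the bijection with 1-cocycles, it is isomorphic as a
group to the additive group of Leibniz 1-cocycles). -/
theorem automorphism_composition_adds_cocycles {K 𝔤 𝔞 : Type*} [Field K]
    [LieRing 𝔤] [LieAlgebra K 𝔤] [AddCommGroup 𝔞] [Module K 𝔞]
    (br : 𝔞 →ₗ[K] 𝔞 →ₗ[K] 𝔞)
    (hleib : ∀ x y z : 𝔞, br x (br y z) = br (br x y) z + br y (br x z))
    (π : 𝔞 →ₗ[K] 𝔤) (hsurj : Function.Surjective π)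
    (hhom : ∀ x y : 𝔞, π (br x y) = ⁅π x, π y⁆)
    (habel : ∀ h₁ h₂ : 𝔞, π h₁ = 0 → π h₂ = 0 → br h₁ h₂ = 0)
    (q : 𝔤 →ₗ[K] 𝔞) (hq : ∀ g : 𝔤, π (q g) = g)
    (F F' : 𝔞 ≃ₗ[K] 𝔞)
    (hFbr : ∀ x y : 𝔞, F (br x y) = br (F x) (F y))
    (hFπ : ∀ x : 𝔞, π (F x) = π x)
    (hFker : ∀ x : 𝔞, π x = 0 → F x = x)
    (hF'br : ∀ x y : 𝔞, F' (br x y) = br (F' x) (F' y))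
    (hF'π : ∀ x : 𝔞, π (F' x) = π x)
    (hF'ker : ∀ x : 𝔞, π x = 0 → F' x = x) :
    (∀ g : 𝔤, F (F' (q g)) - q g = (F (q g) - q g) + (F' (q g) - q g)) ∧
    (∀ x : 𝔞, F (F' x) = F' (F x)) := by
  have key : ∀ g : 𝔤, F (F' (q g)) - q g = (F (q g) - q g) + (F' (q g) - q g) := by
    intro g
    have h1 : π (F' (q g) - q g) = 0 := by simp [hF'π, hq]
    have h2 : F (F' (q g) - q g) = F' (q g) - q g := hFker _ h1
    have h3 : F' (q g) = q g + (F' (q g) - q g) := by abel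
    calc F (F' (q g)) - q g = F (q g + (F' (q g) - q g)) - q g := by rw [← h3]
      _ = F (q g) + F (F' (q g) - q g) - q g := by rw [map_add]
      _ = F (q g) + (F' (q g) - q g) - q g := by rw [h2]
      _ = (F (q g) - q g) + (F' (q g) - q g) := by abel
  refine ⟨key, fun x => ?_⟩
  have key' : ∀ g : 𝔤, F' (F (q g)) - q g = (F' (q g) - q g) + (F (q g) - q g) := by
    intro g
    have h1 : π (F (q g) - q g) = 0 := by simp [hFπ, hq]
    have h2 : F' (F (q g) - q g) = F (q g) - q g := hF'ker _ h1
    have h3 : F (q g) = q g + (F (q g) - q g) := by abel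
    calc F' (F (q g)) - q g = F' (q g + (F (q g) - q g)) - q g := by rw [← h3]
      _ = F' (q g) + F' (F (q g) - q g) - q g := by rw [map_add]
      _ = F' (q g) + (F (q g) - q g) - q g := by rw [h2]
      _ = (F' (q g) - q g) + (F (q g) - q g) := by abel
  set g := π x with hg
  have hker : π (x - q g) = 0 := by simp [hq, hg]
  have hFx : F (x - q g) = x - q g := hFker _ hker
  have hF'x : F' (x - q g) = x - q g := hF'ker _ hker
  have hx : x = q g + (x - q g) := by abel
  calc F (F' x) = F (F' (q g + (x - q g))) := by rw [← hx]
    _ = F (F' (q g)) + F (F' (x - q g)) := by rw [map_add, map_add]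
    _ = F (F' (q g)) + (x - q g) := by rw [hF'x, hFx]
    _ = F' (F (q g)) + (x - q g) := by
        have h : F (F' (q g)) - q g = F' (F (q g)) - q g := by
          rw [key g, key' g]; abel
        rw [sub_left_inj.mp h]
    _ = F' (F (q g + (x - q g))) := by rw [map_add, map_add, hFx, hF'x]
    _ = F' (F x) := by rw [← hx]
end
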